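/- Let (X,d) and (Y,ρ) be metric spaces, a ∈ X, b ∈ Y, and f: X → Y with f(a) = b. If for every normalizing sequence r̃ and every maximal self-stable family X̃_{a,r̃} ⊆ X̃ there exist a normalizing sequence t̃ and a maximal self-stable family Ỹ_{b,t̃} ⊆ Ỹ such that f is differentiable w.r.t. the pair (X̃_{a,r̃}, Ỹ_{b,t̃}), then f is continuous at a. -/

import Mathlib

open Filter Topology

/-- A normalizing sequence: positive reals tending to 0. -/
def Normalizing (r : ℕ → ℝ) : Prop :=
  (∀ n, 0 < r n) ∧ Tendsto r atTop (nhds 0)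

/-- Two sequences in `X` are mutually stable w.r.t. `r`:
the limit of `dist (x n) (y n) / r n` exists and is finite. -/
def MutuallyStable {X : Type*} [MetricSpace X] (r : ℕ → ℝ) (x y : ℕ → X) : Prop :=
  ∃ L : ℝ, Tendsto (fun n => dist (x n) (y n) / r n) atTop (nhds L)

/-- The normalized limit distance `d̃`. -/
noncomputable def dtilde {X : Type*} [MetricSpace X] (r : ℕ → ℝ) (x y : ℕ → X) : ℝ :=
  limUnder atTop (fun n => dist (x n) (y n) / r n)

/-- A family is self-stable if every two members are mutually stable. -/
def SelfStable {X : Type*} [MetricSpace X] (r : ℕ → ℝ) (F : Set (ℕ → X)) : Prop :=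
  ∀ x ∈ F, ∀ y ∈ F, MutuallyStable r x y

/-- A family is maximal self-stable if it is self-stable and maximal with that property. -/
def MaximalSelfStable {X : Type*} [MetricSpace X] (r : ℕ → ℝ) (F : Set (ℕ → X)) : Prop :=
  SelfStable r F ∧ ∀ G, SelfStable r G → F ⊆ G → G = F

/-- Every self-stable family extends to a maximal self-stable family. -/
lemma exists_maximal_selfStable {X : Type*} [MetricSpace X] (r : ℕ → ℝ)
    (F0 : Set (ℕ → X)) (h0 : SelfStable r F0) :
    ∃ F, F0 ⊆ F ∧ MaximalSelfStable r F := by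
  obtain ⟨m, hsub, hmem, hmax⟩ := zorn_subset_nonempty {F | SelfStable r F}
    (fun c hc hchain hne => by
      refine ⟨⋃₀ c, ?_, fun s hs => Set.subset_sUnion_of_mem hs⟩
      rintro x ⟨s, hs, hxs⟩ y ⟨u, hu, hyu⟩
      rcases hchain.total hs hu with hsu | hus
      · exact hc hu x (hsu hxs) y hyu
      · exact hc hs x hxs y (hus hyu)) F0 h0
  exact ⟨m, hsub, hmem, fun G hG hmG => (hmax hG hmG).antisymm hmG⟩

/-- If `f` is differentiable w.r.t. some pair of maximal self-stable families for every
normalizing sequence and every maximal self-stable family at `a`, then `f` is continuous at `a`. -/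
theorem stmt_13 {X Y : Type*} [MetricSpace X] [MetricSpace Y]
    (a : X) (b : Y) (f : X → Y) (hfa : f a = b)
    (h : ∀ r : ℕ → ℝ, Normalizing r → ∀ F : Set (ℕ → X),
      MaximalSelfStable r F → (fun _ => a) ∈ F →
        ∃ t : ℕ → ℝ, Normalizing t ∧ ∃ G : Set (ℕ → Y),
          MaximalSelfStable t G ∧ (fun _ => b) ∈ G ∧
          (∀ x ∈ F, (fun n => f (x n)) ∈ G) ∧
          (∀ x ∈ F, ∀ y ∈ F, dtilde r x y = 0 →
            dtilde t (fun n => f (x n)) (fun n => f (y n)) = 0)) :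
    ContinuousAt f a := by
  rw [ContinuousAt, tendsto_iff_seq_tendsto]
  intro u hu
  -- distance sequence
  set d : ℕ → ℝ := fun n => dist (u n) a with hd
  have hd0 : Tendsto d atTop (nhds 0) := by
    simpa [hd] using (tendsto_iff_dist_tendsto_zero.mp hu)
  -- the normalizing sequence
  set r : ℕ → ℝ := fun n => Real.sqrt (d n) + (1/2 : ℝ) ^ n with hr
  have hrpos : ∀ n, 0 < r n := fun n =>
    add_pos_of_nonneg_of_pos (Real.sqrt_nonneg _) (by positivity)
  have hrnorm : Normalizing r := by
    refine ⟨hrpos, ?_⟩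
    have h1 : Tendsto (fun n => Real.sqrt (d n)) atTop (nhds 0) := by
      simpa [Function.comp_def] using (Real.continuous_sqrt.continuousAt.tendsto.comp hd0)
    have h2 : Tendsto (fun n : ℕ => (1/2 : ℝ) ^ n) atTop (nhds 0) :=
      tendsto_pow_atTop_nhds_zero_of_lt_one (by norm_num) (by norm_num)
    have := h1.add h2
    rw [add_zero] at this
    exact this
  -- the ratio dist(u n, a)/r n tends to 0
  have hratio : Tendsto (fun n => dist (u n) a / r n) atTop (nhds 0) := by
    have hle : ∀ n, dist (u n) a / r n ≤ Real.sqrt (d n) := by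
      intro n
      rw [div_le_iff₀ (hrpos n)]
      have : d n ≤ Real.sqrt (d n) * r n := by
        calc d n = Real.sqrt (d n) * Real.sqrt (d n) :=
              (Real.mul_self_sqrt dist_nonneg).symm
          _ ≤ Real.sqrt (d n) * r n := by
              apply mul_le_mul_of_nonneg_left _ (Real.sqrt_nonneg _)
              simp only [hr]
              nlinarith [pow_pos (by norm_num : (0:ℝ) < 1/2) n]
      simpa [hd] using this
    have hge : ∀ n, 0 ≤ dist (u n) a / r n := fun n =>
      div_nonneg dist_nonneg (hrpos n).le
    have h1 : Tendsto (fun n => Real.sqrt (d n)) atTop (nhds 0) := by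
      simpa [Function.comp_def] using (Real.continuous_sqrt.continuousAt.tendsto.comp hd0)
    exact squeeze_zero hge hle h1
  -- the initial self-stable family
  set F0 : Set (ℕ → X) := {u, fun _ => a} with hF0
  have hself : SelfStable r F0 := by
    rintro x (rfl | rfl) y (rfl | rfl)
    · exact ⟨0, by simpa using tendsto_const_nhds⟩
    · exact ⟨0, hratio⟩
    · exact ⟨0, by simpa [dist_comm] using hratio⟩
    · exact ⟨0, by simpa using tendsto_const_nhds⟩
  obtain ⟨F, hsub, hFmax⟩ := exists_maximal_selfStable r F0 hself
  have haF : (fun _ => a) ∈ F := hsub (by simp [hF0])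
  have huF : u ∈ F := hsub (by simp [hF0])
  obtain ⟨t, htnorm, G, hGmax, hbG, hfG, hdt⟩ := h r hrnorm F hFmax haF
  -- dtilde r u (const a) = 0
  have hdτ : dtilde r u (fun _ => a) = 0 := hratio.limUnder_eq
  have key : dtilde t (fun n => f (u n)) (fun _ => b) = 0 := by
    have := hdt u huF (fun _ => a) haF hdτ
    simpa [hfa] using this
  -- the image sequences are mutually stable in G
  have hfuG : (fun n => f (u n)) ∈ G := hfG u huF
  obtain ⟨L, hL⟩ := hGmax.1 _ hfuG _ hbG
  have hL0 : L = 0 := by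
    have := hL.limUnder_eq
    rw [dtilde] at key
    rw [key] at this
    exact this.symm
  subst hL0
  -- conclude
  have hdist : Tendsto (fun n => dist (f (u n)) b) atTop (nhds 0) := by
    have := hL.mul htnorm.2
    have heq : ∀ n, dist (f (u n)) b / t n * t n = dist (f (u n)) b := fun n =>
      div_mul_cancel₀ _ (htnorm.1 n).ne'
    simpa [heq] using this
  have hres : Tendsto (fun n => f (u n)) atTop (nhds b) :=
    tendsto_iff_dist_tendsto_zero.mpr hdist
  simpa [hfa, Function.comp_def] using hres
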